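/- Let τ be an invertible measure-preserving transformation of a probability space and suppose E ∈ ℬ satisfies p(⋃_{k=1}^{n} τ^{-k}E) < 1 for all n ≥ 1. Let F = X ∖ E and f = 1_F - p(F). Then for every n, ‖Σ_{k=1}^{n} f∘τᵏ‖_∞ ≥ n·p(E), so f is not a τ-coboundary with transfer function in L^∞(X) (provided p(E) > 0). -/

import Mathlib

open MeasureTheory ENNReal

/-- If p(⋃_{k=1}^n τ^{-k}E) < 1 for all n, F = X∖E and f = 1_F - p(F),
then ‖Σ_{k=1}^n f∘τᵏ‖_∞ ≥ n·p(E) for all n, so if p(E) > 0 then f is not a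
τ-coboundary with transfer function in L^∞. -/
theorem stmt13 {X : Type*} [MeasurableSpace X] (μ : Measure X) [IsProbabilityMeasure μ]
    (τ τi : X → X) (hτ : MeasurePreserving τ μ μ) (hτi : MeasurePreserving τi μ μ)
    (hinv : ∀ x, τi (τ x) = x ∧ τ (τi x) = x)
    (E : Set X) (hE : MeasurableSet E)
    (hsmall : ∀ n : ℕ, 1 ≤ n → μ (⋃ k ∈ Finset.Icc 1 n, τ^[k] ⁻¹' E) < 1)
    (f : X → ℝ)
    (hf : ∀ x, f x = Set.indicator Eᶜ (fun _ => (1 : ℝ)) x - (μ Eᶜ).toReal) :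
    (∀ n : ℕ, 1 ≤ n →
      (n : ℝ≥0∞) * μ E ≤ eLpNorm (fun x => ∑ k ∈ Finset.Icc 1 n, f (τ^[k] x)) ⊤ μ) ∧
    (0 < μ E →
      ¬ ∃ h : X → ℝ, MemLp h ⊤ μ ∧ ∀ᵐ x ∂μ, f x = h x - h (τ x)) := by
  have hμE : μ E ≠ ∞ := (measure_lt_top μ E).ne
  have htoReal : (μ Eᶜ).toReal = 1 - (μ E).toReal := by
    rw [measure_compl hE hμE, measure_univ,
      ENNReal.toReal_sub_of_le prob_le_one one_ne_top, ENNReal.toReal_one]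
  have key : ∀ n : ℕ, 1 ≤ n →
      (n : ℝ≥0∞) * μ E ≤ eLpNorm (fun x => ∑ k ∈ Finset.Icc 1 n, f (τ^[k] x)) ⊤ μ := by
    intro n hn
    set U : Set X := ⋃ k ∈ Finset.Icc 1 n, τ^[k] ⁻¹' E with hU
    have hUmeas : MeasurableSet U :=
      MeasurableSet.biUnion (Finset.Icc 1 n).countable_toSet
        fun k _ => (hτ.iterate k).measurable hE
    have hGpos : 0 < μ Uᶜ := by
      rw [measure_compl hUmeas (measure_lt_top μ _).ne, measure_univ]
      exact tsub_pos_of_lt (hsmall n hn)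
    have hsum : ∀ x ∈ Uᶜ,
        (∑ k ∈ Finset.Icc 1 n, f (τ^[k] x)) = n * (μ E).toReal := by
      intro x hx
      have hall : ∀ k ∈ Finset.Icc 1 n, f (τ^[k] x) = (μ E).toReal := by
        intro k hk
        have hxk : τ^[k] x ∈ Eᶜ := by
          intro hmem
          exact hx (Set.mem_biUnion hk hmem)
        rw [hf, Set.indicator_of_mem hxk, htoReal]; ring
      rw [Finset.sum_congr rfl hall, Finset.sum_const, Nat.card_Icc]
      simp [nsmul_eq_mul]
    -- find a point in Uᶜ where the a.e. bound by the essSup holds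
    set S : X → ℝ := fun x => ∑ k ∈ Finset.Icc 1 n, f (τ^[k] x) with hS
    have hae : ∀ᵐ y ∂μ, (‖S y‖₊ : ℝ≥0∞) ≤ eLpNormEssSup S μ := ae_le_eLpNormEssSup
    obtain ⟨x, hxG, hxle⟩ : ∃ x, x ∈ Uᶜ ∧ (‖S x‖₊ : ℝ≥0∞) ≤ eLpNormEssSup S μ := by
      by_contra hcontra
      push_neg at hcontra
      have hsub : Uᶜ ⊆ {y | ¬ ((‖S y‖₊ : ℝ≥0∞) ≤ eLpNormEssSup S μ)} :=
        fun y hy => not_le.mpr (hcontra y hy)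
      have h0 : μ {y | ¬ ((‖S y‖₊ : ℝ≥0∞) ≤ eLpNormEssSup S μ)} = 0 := ae_iff.mp hae
      exact hGpos.ne' (measure_mono_null hsub h0)
    have hSx : S x = (n : ℝ) * (μ E).toReal := hsum x hxG
    have hval : (‖S x‖₊ : ℝ≥0∞) = (n : ℝ≥0∞) * μ E := by
      rw [hSx, ← enorm_eq_nnnorm, Real.enorm_eq_ofReal (by positivity), ENNReal.ofReal_mul (by positivity),
        ENNReal.ofReal_natCast, ENNReal.ofReal_toReal hμE]
    rw [eLpNorm_exponent_top]
    calc (n : ℝ≥0∞) * μ E = (‖S x‖₊ : ℝ≥0∞) := hval.symm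
      _ ≤ eLpNormEssSup S μ := hxle
  refine ⟨key, ?_⟩
  intro hEpos
  rintro ⟨h, hmem, haecob⟩
  set C := eLpNormEssSup h μ with hC
  have hClt : C < ∞ := by
    rw [hC, ← eLpNorm_exponent_top]; exact hmem.2
  have hpull : ∀ᵐ x ∂μ, ∀ k : ℕ,
      f (τ^[k] x) = h (τ^[k] x) - h (τ^[k+1] x) ∧ (‖h (τ^[k] x)‖₊ : ℝ≥0∞) ≤ C := by
    rw [ae_all_iff]
    intro k
    have hk := (hτ.iterate k).quasiMeasurePreserving.ae
      (haecob.and (ae_le_eLpNormEssSup (f := h) (μ := μ)))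
    filter_upwards [hk] with x hx
    refine ⟨?_, hx.2⟩
    rw [hx.1, Function.iterate_succ_apply']
  have hbound : ∀ n : ℕ,
      eLpNorm (fun x => ∑ k ∈ Finset.Icc 1 n, f (τ^[k] x)) ⊤ μ ≤ 2 * C := by
    intro n
    rw [eLpNorm_exponent_top, eLpNormEssSup]
    refine essSup_le_of_ae_le _ ?_
    filter_upwards [hpull] with x hx
    have htel : (∑ k ∈ Finset.Icc 1 n, f (τ^[k] x)) = h (τ^[1] x) - h (τ^[n+1] x) := by
      have h1 : (∑ k ∈ Finset.Icc 1 n, f (τ^[k] x))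
          = ∑ k ∈ Finset.Icc 1 n, (h (τ^[k] x) - h (τ^[k+1] x)) :=
        Finset.sum_congr rfl fun k _ => (hx k).1
      have htel' : ∀ m : ℕ, ∑ k ∈ Finset.Icc 1 m, (h (τ^[k] x) - h (τ^[k+1] x))
          = h (τ^[1] x) - h (τ^[m+1] x) := by
        intro m
        induction m with
        | zero => simp
        | succ m ih =>
          rw [Finset.sum_Icc_succ_top (by omega), ih]; ring
      rw [h1, htel']
    have : (‖(∑ k ∈ Finset.Icc 1 n, f (τ^[k] x))‖₊ : ℝ≥0∞) ≤ 2 * C := by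
      rw [htel]
      calc (‖h (τ^[1] x) - h (τ^[n+1] x)‖₊ : ℝ≥0∞)
          ≤ (‖h (τ^[1] x)‖₊ : ℝ≥0∞) + (‖h (τ^[n+1] x)‖₊ : ℝ≥0∞) := by
            exact_mod_cast nnnorm_sub_le _ _
        _ ≤ C + C := add_le_add (hx 1).2 (hx (n+1)).2
        _ = 2 * C := (two_mul C).symm
    exact this
  -- derive a contradiction
  have hdivne : 2 * C / μ E ≠ ∞ :=
    (ENNReal.div_lt_top (by finiteness) hEpos.ne').ne
  obtain ⟨N, hN⟩ := ENNReal.exists_nat_gt hdivne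
  have hN1 : 2 * C / μ E < ((N + 1 : ℕ) : ℝ≥0∞) := by
    refine hN.trans_le ?_
    exact_mod_cast Nat.cast_le.mpr (Nat.le_succ N)
  have hlt : 2 * C < ((N + 1 : ℕ) : ℝ≥0∞) * μ E := by
    rw [ENNReal.div_lt_iff (Or.inl hEpos.ne') (Or.inl hμE)] at hN1
    exact hN1
  have hchain := (key (N+1) (by omega)).trans (hbound (N+1))
  exact absurd hchain (not_le.mpr hlt)
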